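/- Let A^{(k)}, B^{(k)} be sequences of symmetric block 2×2 matrices B^{(k)} = [[B_{11}^{(k)}, B_{12}^{(k)}],[B_{12}^{(k)T}, B_{22}^{(k)}]] with B_{11}^{(k)} → A₁₁ symmetric positive definite, B_{12}^{(k)} bounded, and σ_min(B_{22}^{(k)}) → ∞. Then for large k, B^{(k)} is invertible and the (1,1) block of (B^{(k)})^{-1} converges to A₁₁^{-1}, while the (2,2) and (1,2) blocks of (B^{(k)})^{-1} converge to 0. -/

import Mathlib

open Matrix Filter Topology

/-- Euclidean minimal singular value of a matrix. -/
noncomputable def sminE {a b : Type*} [Fintype a] [Fintype b] (M : Matrix a b ℝ) : ℝ :=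
  sInf {t | ∃ x : b → ℝ, Real.sqrt (∑ i, x i ^ 2) = 1 ∧
    t = Real.sqrt (∑ i, M.mulVec x i ^ 2)}

section sminE
variable {q : ℕ}

lemma sminE_bddBelow (M : Matrix (Fin q) (Fin q) ℝ) :
    BddBelow {t | ∃ x : Fin q → ℝ, Real.sqrt (∑ i, x i ^ 2) = 1 ∧
      t = Real.sqrt (∑ i, M.mulVec x i ^ 2)} :=
  ⟨0, by rintro t ⟨x, -, rfl⟩; exact Real.sqrt_nonneg _⟩

lemma sminE_nonneg (M : Matrix (Fin q) (Fin q) ℝ) : 0 ≤ sminE M :=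
  Real.sInf_nonneg (by rintro t ⟨x, -, rfl⟩; exact Real.sqrt_nonneg _)

lemma sqrt_sum_sq_smul (c : ℝ) (v : Fin q → ℝ) :
    Real.sqrt (∑ i, (c * v i) ^ 2) = |c| * Real.sqrt (∑ i, v i ^ 2) := by
  rw [← Real.sqrt_sq_eq_abs, ← Real.sqrt_mul (sq_nonneg c)]
  congr 1
  rw [Finset.mul_sum]
  exact Finset.sum_congr rfl fun i _ => (mul_pow _ _ _)

lemma sminE_mul_le (M : Matrix (Fin q) (Fin q) ℝ) (x : Fin q → ℝ) :
    sminE M * Real.sqrt (∑ i, x i ^ 2) ≤ Real.sqrt (∑ i, M.mulVec x i ^ 2) := by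
  rcases eq_or_ne x 0 with rfl | hx
  · simp only [Matrix.mulVec_zero]; simpa using Real.sqrt_nonneg (∑ i, M.mulVec 0 i ^ 2)
  · set n : ℝ := Real.sqrt (∑ i, x i ^ 2) with hn
    have hsum : 0 < ∑ i, x i ^ 2 := by
      obtain ⟨i, hi⟩ := Function.ne_iff.1 hx
      exact Finset.sum_pos' (fun j _ => sq_nonneg _)
        ⟨i, Finset.mem_univ i, by exact pow_pos (abs_pos.mpr hi) 2 |>.trans_le (by rw [sq_abs])⟩
    have hnpos : 0 < n := Real.sqrt_pos.2 hsum
    have hn2 : n ^ 2 = ∑ i, x i ^ 2 := Real.sq_sqrt hsum.le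
    have hunit : Real.sqrt (∑ i, (n⁻¹ • x) i ^ 2) = 1 := by
      simp only [Pi.smul_apply, smul_eq_mul]
      rw [sqrt_sum_sq_smul, abs_of_pos (inv_pos.2 hnpos), ← hn,
        inv_mul_cancel₀ hnpos.ne']
    have hmem : Real.sqrt (∑ i, M.mulVec (n⁻¹ • x) i ^ 2) ∈
        {t | ∃ y : Fin q → ℝ, Real.sqrt (∑ i, y i ^ 2) = 1 ∧
          t = Real.sqrt (∑ i, M.mulVec y i ^ 2)} := ⟨n⁻¹ • x, hunit, rfl⟩
    have h1 : sminE M ≤ Real.sqrt (∑ i, M.mulVec (n⁻¹ • x) i ^ 2) :=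
      csInf_le (sminE_bddBelow M) hmem
    have h2 : Real.sqrt (∑ i, M.mulVec (n⁻¹ • x) i ^ 2)
        = n⁻¹ * Real.sqrt (∑ i, M.mulVec x i ^ 2) := by
      have : M.mulVec (n⁻¹ • x) = n⁻¹ • M.mulVec x := M.mulVec_smul n⁻¹ x
      rw [this]
      simp only [Pi.smul_apply, smul_eq_mul]
      rw [sqrt_sum_sq_smul, abs_of_pos (inv_pos.2 hnpos)]
    rw [h2] at h1
    calc sminE M * n ≤ n⁻¹ * Real.sqrt (∑ i, M.mulVec x i ^ 2) * n := by
          exact mul_le_mul_of_nonneg_right h1 hnpos.le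
      _ = Real.sqrt (∑ i, M.mulVec x i ^ 2) := by field_simp

lemma isUnit_of_sminE_pos (M : Matrix (Fin q) (Fin q) ℝ) (h : 0 < sminE M) : IsUnit M := by
  rw [← Matrix.mulVec_injective_iff_isUnit]
  intro x y hxy
  have hz : M.mulVec (x - y) = 0 := by
    rw [Matrix.mulVec_sub, hxy, sub_self]
  have h1 := sminE_mul_le M (x - y)
  rw [hz] at h1
  simp only [Pi.zero_apply] at h1
  have h2 : Real.sqrt (∑ _i : Fin q, (0:ℝ) ^ 2) = 0 := by simp
  rw [h2] at h1
  have hs0 : Real.sqrt (∑ i, (x - y) i ^ 2) = 0 := by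
    have hs := Real.sqrt_nonneg (∑ i, (x - y) i ^ 2)
    nlinarith
  have hsum : ∑ i, (x - y) i ^ 2 = 0 := by
    rwa [Real.sqrt_eq_zero (by positivity)] at hs0
  have hxy0 : ∀ i, (x - y) i = 0 := by
    intro i
    have := (Finset.sum_eq_zero_iff_of_nonneg (fun j _ => sq_nonneg ((x - y) j))).1 hsum
      i (Finset.mem_univ i)
    exact (pow_eq_zero_iff (two_ne_zero)).1 this
  exact sub_eq_zero.1 (funext hxy0)

lemma abs_inv_entry_le (M : Matrix (Fin q) (Fin q) ℝ) (h : 0 < sminE M) (i j : Fin q) :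
    |M⁻¹ i j| ≤ (sminE M)⁻¹ := by
  have hu : IsUnit M.det := (Matrix.isUnit_iff_isUnit_det M).1 (isUnit_of_sminE_pos M h)
  set y : Fin q → ℝ := M⁻¹.mulVec (Pi.single j 1) with hy
  have hMy : M.mulVec y = Pi.single j 1 := by
    rw [hy, Matrix.mulVec_mulVec, Matrix.mul_nonsing_inv M hu, Matrix.one_mulVec]
  have h1 := sminE_mul_le M y
  rw [hMy] at h1
  have h2 : Real.sqrt (∑ l, (Pi.single j 1 : Fin q → ℝ) l ^ 2) = 1 := by
    have hx : (∑ l, (Pi.single j 1 : Fin q → ℝ) l ^ 2) = 1 := by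
      simp [Pi.single_apply, ite_pow]
    rw [hx, Real.sqrt_one]
  rw [h2] at h1
  have hylei : |y i| ≤ Real.sqrt (∑ l, y l ^ 2) := by
    rw [← Real.sqrt_sq_eq_abs]
    exact Real.sqrt_le_sqrt (Finset.single_le_sum (fun l _ => sq_nonneg (y l))
      (Finset.mem_univ i))
  have hle : Real.sqrt (∑ l, y l ^ 2) ≤ (sminE M)⁻¹ := by
    have hc : sminE M * (sminE M)⁻¹ = 1 := mul_inv_cancel₀ h.ne'
    nlinarith [h1, hc, h]
  have hyij : y i = M⁻¹ i j := by
    simp [hy, Matrix.mulVec, dotProduct, Pi.single_apply]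
  rw [← hyij]
  exact hylei.trans hle

end sminE

section tendstoMachinery
variable {a b c : Type*} [Fintype a] [Fintype b] [Fintype c]

/-- Entrywise eventual boundedness of a sequence of matrices. -/
def EvB (M : ℕ → Matrix a b ℝ) : Prop := ∀ i j, ∃ C, ∀ᶠ k in atTop, |M k i j| ≤ C

lemma bdd_mul_tendsto_zero {f g : ℕ → ℝ} {C : ℝ}
    (hf : ∀ᶠ k in atTop, |f k| ≤ C) (hg : Tendsto g atTop (𝓝 0)) :
    Tendsto (fun k => f k * g k) atTop (𝓝 0) := by
  have habs : Tendsto (fun k => C * |g k|) atTop (𝓝 0) := by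
    have := hg.abs.const_mul C
    simpa using this
  refine squeeze_zero_norm' ?_ habs
  filter_upwards [hf] with k hk
  calc ‖f k * g k‖ = |f k| * |g k| := abs_mul _ _
    _ ≤ C * |g k| := mul_le_mul_of_nonneg_right hk (abs_nonneg _)

lemma tendsto_entry {M : ℕ → Matrix a b ℝ} {L : Matrix a b ℝ}
    (h : Tendsto M atTop (𝓝 L)) (i : a) (j : b) :
    Tendsto (fun k => M k i j) atTop (𝓝 (L i j)) := by
  have h1 := tendsto_pi_nhds.1 h i
  exact tendsto_pi_nhds.1 h1 j

lemma tendsto_matrix_of_entries {M : ℕ → Matrix a b ℝ}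
    (h : ∀ i j, Tendsto (fun k => M k i j) atTop (𝓝 0)) :
    Tendsto M atTop (𝓝 0) := by
  apply tendsto_pi_nhds.2
  intro i
  apply tendsto_pi_nhds.2
  intro j
  exact h i j

lemma evB_of_tendsto {M : ℕ → Matrix a b ℝ} {L : Matrix a b ℝ}
    (h : Tendsto M atTop (𝓝 L)) : EvB M := by
  intro i j
  refine ⟨|L i j| + 1, ?_⟩
  have h2 : ∀ᶠ k in atTop, |M k i j| < |L i j| + 1 :=
    (tendsto_entry h i j).abs.eventually_lt_const (by linarith)
  filter_upwards [h2] with k hk using hk.le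

lemma evB_mul {M : ℕ → Matrix a b ℝ} {N : ℕ → Matrix b c ℝ}
    (hM : EvB M) (hN : EvB N) : EvB (fun k => M k * N k) := by
  intro i j
  choose C1 h1 using fun l => hM i l
  choose C2 h2 using fun l => hN l j
  refine ⟨∑ l, |C1 l| * |C2 l|, ?_⟩
  have hall : ∀ᶠ k in atTop, ∀ l, |M k i l| ≤ C1 l ∧ |N k l j| ≤ C2 l := by
    rw [eventually_all]
    intro l
    filter_upwards [h1 l, h2 l] with k ha hb using ⟨ha, hb⟩
  filter_upwards [hall] with k hk
  calc |(M k * N k) i j| = |∑ l, M k i l * N k l j| := by rw [Matrix.mul_apply]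
    _ ≤ ∑ l, |M k i l * N k l j| := Finset.abs_sum_le_sum_abs _ _
    _ ≤ ∑ l, |C1 l| * |C2 l| := by
        refine Finset.sum_le_sum fun l _ => ?_
        rw [abs_mul]
        exact mul_le_mul ((hk l).1.trans (le_abs_self _))
          ((hk l).2.trans (le_abs_self _)) (abs_nonneg _) (abs_nonneg _)

lemma evB_mul_tendsto_zero {M : ℕ → Matrix a b ℝ} {N : ℕ → Matrix b c ℝ}
    (hM : EvB M) (hN : Tendsto N atTop (𝓝 0)) :
    Tendsto (fun k => M k * N k) atTop (𝓝 0) := by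
  refine tendsto_matrix_of_entries fun i j => ?_
  have he : (fun k => (M k * N k) i j) = fun k => ∑ l, M k i l * N k l j := by
    funext k
    rw [Matrix.mul_apply]
  rw [he]
  have hsum : Tendsto (fun k => ∑ l, M k i l * N k l j) atTop (𝓝 (∑ _l : b, (0:ℝ))) := by
    refine tendsto_finset_sum _ fun l _ => ?_
    obtain ⟨C, hC⟩ := hM i l
    have hNl : Tendsto (fun k => N k l j) atTop (𝓝 0) := by
      simpa using tendsto_entry hN l j
    exact bdd_mul_tendsto_zero hC hNl
  simpa using hsum

lemma tendsto_zero_mul_evB {M : ℕ → Matrix a b ℝ} {N : ℕ → Matrix b c ℝ}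
    (hM : Tendsto M atTop (𝓝 0)) (hN : EvB N) :
    Tendsto (fun k => M k * N k) atTop (𝓝 0) := by
  refine tendsto_matrix_of_entries fun i j => ?_
  have he : (fun k => (M k * N k) i j) = fun k => ∑ l, M k i l * N k l j := by
    funext k
    rw [Matrix.mul_apply]
  rw [he]
  have hsum : Tendsto (fun k => ∑ l, M k i l * N k l j) atTop (𝓝 (∑ _l : b, (0:ℝ))) := by
    refine tendsto_finset_sum _ fun l _ => ?_
    obtain ⟨C, hC⟩ := hN l j
    have hMl : Tendsto (fun k => M k i l) atTop (𝓝 0) := by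
      simpa using tendsto_entry hM i l
    have := bdd_mul_tendsto_zero hC hMl
    simpa [mul_comm] using this
  simpa using hsum

end tendstoMachinery

/-- for symmetric block matrices `B⁽ᵏ⁾ = [[B₁₁, B₁₂],[B₁₂ᵀ, B₂₂]]` with
`B₁₁⁽ᵏ⁾ → A₁₁` s.p.d., `B₁₂⁽ᵏ⁾` bounded and `σ_min(B₂₂⁽ᵏ⁾) → ∞`, eventually `B⁽ᵏ⁾` is
invertible, the `(1,1)` block of the inverse tends to `A₁₁⁻¹`, and the `(1,2)` and
`(2,2)` blocks of the inverse tend to `0`. -/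
theorem stmt4 (p q : ℕ)
    (B11 : ℕ → Matrix (Fin p) (Fin p) ℝ) (B12 : ℕ → Matrix (Fin p) (Fin q) ℝ)
    (B22 : ℕ → Matrix (Fin q) (Fin q) ℝ)
    (hsym11 : ∀ k, (B11 k).IsSymm) (hsym22 : ∀ k, (B22 k).IsSymm)
    (A11 : Matrix (Fin p) (Fin p) ℝ) (hA : A11.PosDef)
    (h11 : Tendsto B11 atTop (𝓝 A11))
    (hbdd : ∃ C : ℝ, ∀ k, ∀ i j, |B12 k i j| ≤ C)
    (h22 : Tendsto (fun k => sminE (B22 k)) atTop atTop) :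
    (∃ K : ℕ, ∀ k ≥ K, IsUnit (Matrix.fromBlocks (B11 k) (B12 k) (B12 k)ᵀ (B22 k)).det) ∧
    Tendsto (fun k => ((Matrix.fromBlocks (B11 k) (B12 k) (B12 k)ᵀ (B22 k))⁻¹).toBlocks₁₁)
      atTop (𝓝 A11⁻¹) ∧
    Tendsto (fun k => ((Matrix.fromBlocks (B11 k) (B12 k) (B12 k)ᵀ (B22 k))⁻¹).toBlocks₁₂)
      atTop (𝓝 0) ∧
    Tendsto (fun k => ((Matrix.fromBlocks (B11 k) (B12 k) (B12 k)ᵀ (B22 k))⁻¹).toBlocks₂₂)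
      atTop (𝓝 0) := by
  classical
  obtain ⟨C, hC⟩ := hbdd
  have hmin1 : ∀ᶠ k in atTop, 1 ≤ sminE (B22 k) := h22.eventually_ge_atTop 1
  have hinv_small : Tendsto (fun k => (sminE (B22 k))⁻¹) atTop (𝓝 0) :=
    tendsto_inv_atTop_zero.comp h22
  have hinv22 : Tendsto (fun k => (B22 k)⁻¹) atTop (𝓝 0) := by
    refine tendsto_matrix_of_entries fun i j => ?_
    refine squeeze_zero_norm' ?_ hinv_small
    filter_upwards [hmin1] with k hk
    exact abs_inv_entry_le (B22 k) (lt_of_lt_of_le one_pos hk) i j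
  have hEv12 : EvB B12 := fun i j => ⟨C, Eventually.of_forall fun k => hC k i j⟩
  have hEv12T : EvB (fun k => (B12 k)ᵀ) :=
    fun i j => ⟨C, Eventually.of_forall fun k => hC k j i⟩
  set S : ℕ → Matrix (Fin p) (Fin p) ℝ :=
    fun k => B11 k - B12 k * (B22 k)⁻¹ * (B12 k)ᵀ with hSdef
  have hS : Tendsto S atTop (𝓝 A11) := by
    have h0 : Tendsto (fun k => B12 k * (B22 k)⁻¹ * (B12 k)ᵀ) atTop (𝓝 0) := by
      have h1 : Tendsto (fun k => B12 k * (B22 k)⁻¹) atTop (𝓝 0) :=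
        evB_mul_tendsto_zero hEv12 hinv22
      exact tendsto_zero_mul_evB h1 hEv12T
    have := h11.sub h0
    simpa using this
  have hdetA : A11.det ≠ 0 := hA.det_pos.ne'
  have hdetS : Tendsto (fun k => (S k).det) atTop (𝓝 A11.det) :=
    ((Continuous.matrix_det continuous_id).tendsto A11).comp hS
  have hdetS_ne : ∀ᶠ k in atTop, (S k).det ≠ 0 := hdetS.eventually_ne hdetA
  have hSinv : Tendsto (fun k => (S k)⁻¹) atTop (𝓝 A11⁻¹) := by
    have hcont : ContinuousAt Inv.inv A11 := by
      refine continuousAt_matrix_inv A11 ?_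
      have hri : (Ring.inverse : ℝ → ℝ) = Inv.inv := funext fun x => Ring.inverse_eq_inv x
      rw [hri]
      exact continuousAt_inv₀ hdetA
    exact hcont.tendsto.comp hS
  have key : ∀ᶠ k in atTop,
      IsUnit (fromBlocks (B11 k) (B12 k) (B12 k)ᵀ (B22 k)).det ∧
      ((fromBlocks (B11 k) (B12 k) (B12 k)ᵀ (B22 k))⁻¹).toBlocks₁₁ = (S k)⁻¹ ∧
      ((fromBlocks (B11 k) (B12 k) (B12 k)ᵀ (B22 k))⁻¹).toBlocks₁₂ =
        -((S k)⁻¹ * B12 k * (B22 k)⁻¹) ∧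
      ((fromBlocks (B11 k) (B12 k) (B12 k)ᵀ (B22 k))⁻¹).toBlocks₂₂ =
        (B22 k)⁻¹ + (B22 k)⁻¹ * (B12 k)ᵀ * (S k)⁻¹ * B12 k * (B22 k)⁻¹ := by
    filter_upwards [hmin1, hdetS_ne] with k hk1 hk2
    have hu22 : IsUnit (B22 k).det :=
      (Matrix.isUnit_iff_isUnit_det _).1 (isUnit_of_sminE_pos _ (lt_of_lt_of_le one_pos hk1))
    letI i22 : Invertible (B22 k) := (B22 k).invertibleOfIsUnitDet hu22
    have hIB : ⅟(B22 k) = (B22 k)⁻¹ := invOf_eq_nonsing_inv (B22 k)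
    have heS : B11 k - B12 k * ⅟(B22 k) * (B12 k)ᵀ = S k := by rw [hIB]
    letI iS : Invertible (B11 k - B12 k * ⅟(B22 k) * (B12 k)ᵀ) :=
      Matrix.invertibleOfIsUnitDet _ (by rw [heS]; exact isUnit_iff_ne_zero.2 hk2)
    letI iAll : Invertible (fromBlocks (B11 k) (B12 k) (B12 k)ᵀ (B22 k)) :=
      Matrix.fromBlocks₂₂Invertible _ _ _ _
    have hIS : ⅟(B11 k - B12 k * ⅟(B22 k) * (B12 k)ᵀ) = (S k)⁻¹ := by
      rw [invOf_eq_nonsing_inv, heS]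
    have hfb : (fromBlocks (B11 k) (B12 k) (B12 k)ᵀ (B22 k))⁻¹ =
        fromBlocks ((S k)⁻¹) (-((S k)⁻¹ * B12 k * (B22 k)⁻¹))
          (-((B22 k)⁻¹ * (B12 k)ᵀ * (S k)⁻¹))
          ((B22 k)⁻¹ + (B22 k)⁻¹ * (B12 k)ᵀ * (S k)⁻¹ * B12 k * (B22 k)⁻¹) := by
      rw [← invOf_eq_nonsing_inv, Matrix.invOf_fromBlocks₂₂_eq, hIS, hIB]
    refine ⟨Matrix.isUnit_det_of_invertible _, ?_, ?_, ?_⟩ <;>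
      simp [hfb, Matrix.toBlocks_fromBlocks₁₁, Matrix.toBlocks_fromBlocks₁₂,
        Matrix.toBlocks_fromBlocks₂₂]
  obtain ⟨K, hK⟩ := eventually_atTop.1 key
  refine ⟨⟨K, fun k hk => (hK k hk).1⟩, ?_, ?_, ?_⟩
  · refine Tendsto.congr' ?_ hSinv
    filter_upwards [key] with k hk
    exact (hk.2.1).symm
  · have hz : Tendsto (fun k => -((S k)⁻¹ * B12 k * (B22 k)⁻¹)) atTop (𝓝 0) := by
      have h1 : EvB (fun k => (S k)⁻¹ * B12 k) := evB_mul (evB_of_tendsto hSinv) hEv12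
      have h2 := evB_mul_tendsto_zero h1 hinv22
      simpa using h2.neg
    refine Tendsto.congr' ?_ hz
    filter_upwards [key] with k hk
    exact (hk.2.2.1).symm
  · have hz : Tendsto (fun k => (B22 k)⁻¹ * (B12 k)ᵀ * (S k)⁻¹ * B12 k * (B22 k)⁻¹)
        atTop (𝓝 0) := by
      have h1 := tendsto_zero_mul_evB hinv22 hEv12T
      have h2 := tendsto_zero_mul_evB h1 (evB_of_tendsto hSinv)
      have h3 := tendsto_zero_mul_evB h2 hEv12
      exact tendsto_zero_mul_evB h3 (evB_of_tendsto hinv22)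
    have hsum : Tendsto
        (fun k => (B22 k)⁻¹ + (B22 k)⁻¹ * (B12 k)ᵀ * (S k)⁻¹ * B12 k * (B22 k)⁻¹)
        atTop (𝓝 0) := by
      have := hinv22.add hz
      simpa using this
    refine Tendsto.congr' ?_ hsum
    filter_upwards [key] with k hk
    exact (hk.2.2.2).symm
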